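/- Let n ≥ 1 and let R : (Fin n → ℝ) → ℝ be a regular measure of risk. Then the functional D defined by D(Z) := R(Z) − E(Z) is a regular measure of deviation: D is convex, lower semicontinuous, D(Z) ≥ 0 for all Z, and D(Z) = 0 if and only if Z is constant. -/

import Mathlib

/-- if `R` is a regular measure of risk (F1, F4, F6, F8), then
`D(Z) := R(Z) − E(Z)` is a regular measure of deviation (F1, F4, F9). -/
theorem regular_risk_gives_regular_deviation (n : ℕ) (hn : 1 ≤ n)
    (R : (Fin n → ℝ) → ℝ)
    (F1 : ∀ Z Z' : Fin n → ℝ, ∀ l : ℝ, 0 < l → l < 1 →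
      R ((1 - l) • Z + l • Z') ≤ (1 - l) * R Z + l * R Z')
    (F4 : LowerSemicontinuous R)
    (F6 : ∀ Z : Fin n → ℝ, (¬ ∃ c : ℝ, ∀ i, Z i = c) → (∑ i, Z i) / n < R Z)
    (F8 : ∀ c : ℝ, R (fun _ => c) = c)
    (D : (Fin n → ℝ) → ℝ)
    (hD : ∀ Z : Fin n → ℝ, D Z = R Z - (∑ i, Z i) / n) :
    (∀ Z Z' : Fin n → ℝ, ∀ l : ℝ, 0 < l → l < 1 →
      D ((1 - l) • Z + l • Z') ≤ (1 - l) * D Z + l * D Z') ∧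
    LowerSemicontinuous D ∧
    (∀ Z : Fin n → ℝ, 0 ≤ D Z) ∧
    (∀ Z : Fin n → ℝ, D Z = 0 ↔ ∃ c : ℝ, ∀ i, Z i = c) := by
  have hn0 : (n : ℝ) ≠ 0 := Nat.cast_ne_zero.mpr (by omega)
  -- key fact: D vanishes on constants
  have hconst : ∀ Z : Fin n → ℝ, (∃ c : ℝ, ∀ i, Z i = c) → D Z = 0 := by
    rintro Z ⟨c, hc⟩
    have hZ : Z = fun _ => c := funext hc
    have hsum : (∑ i, Z i) = n * c := by
      simp [hZ, Finset.sum_const, mul_comm]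
    rw [hD, hsum, hZ, F8]
    field_simp
    ring
  have hpos : ∀ Z : Fin n → ℝ, (¬ ∃ c : ℝ, ∀ i, Z i = c) → 0 < D Z := by
    intro Z h
    rw [hD]
    linarith [F6 Z h]
  refine ⟨?_, ?_, ?_, ?_⟩
  · intro Z Z' l hl0 hl1
    have hsum : (∑ i, ((1 - l) • Z + l • Z') i) = (1 - l) * (∑ i, Z i) + l * (∑ i, Z' i) := by
      simp [Finset.mul_sum, ← Finset.sum_add_distrib]
    rw [hD, hD, hD, hsum]
    have := F1 Z Z' l hl0 hl1
    have h2 : ((1 - l) * (∑ i, Z i) + l * ∑ i, Z' i) / n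
        = (1 - l) * ((∑ i, Z i) / n) + l * ((∑ i, Z' i) / n) := by ring
    rw [h2]; ring_nf; linarith
  · have hE : Continuous fun Z : Fin n → ℝ => -((∑ i, Z i) / n) := by
      have : Continuous fun Z : Fin n → ℝ => (∑ i, Z i) := by
        exact continuous_finset_sum _ fun i _ => continuous_apply i
      continuity
    have : LowerSemicontinuous fun Z : Fin n → ℝ => R Z + -((∑ i, Z i) / n) :=
      F4.add hE.lowerSemicontinuous
    have hDeq : D = fun Z : Fin n → ℝ => R Z + -((∑ i, Z i) / n) := by
      funext Z; rw [hD]; ring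
    rw [hDeq]; exact this
  · intro Z
    by_cases h : ∃ c : ℝ, ∀ i, Z i = c
    · exact le_of_eq (hconst Z h).symm
    · exact (hpos Z h).le
  · intro Z
    constructor
    · intro h0
      by_contra h
      exact absurd h0 (ne_of_gt (hpos Z h))
    · exact hconst Z
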